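/- For every real number α: α is badly approximable if and only if the forward diagonal orbit g_{ℝ>0}Λ_α = {g_tΛ_α : t > 0} is precompact in X. -/

import Mathlib

open Matrix
noncomputable section

/-- `SL₂(ℝ)`. -/
abbrev SL2R := Matrix.SpecialLinearGroup (Fin 2) ℝ

/-- `SL₂(ℝ)` carries the topology induced from the space of matrices. -/
instance : TopologicalSpace SL2R :=
  TopologicalSpace.induced (fun g : SL2R => (g : Matrix (Fin 2) (Fin 2) ℝ)) inferInstance

/-- The subgroup `SL₂(ℤ)` of `SL₂(ℝ)`. -/
def Gamma : Subgroup SL2R :=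
  (Matrix.SpecialLinearGroup.map (n := Fin 2) (Int.castRingHom ℝ)).range

/-- `X = SL₂(ℝ)/SL₂(ℤ)`, the space of unimodular lattices in `ℝ²`,
with the quotient topology. -/
abbrev XSpace := SL2R ⧸ Gamma

/-- The diagonal matrix `g_t = [[eᵗ, 0], [0, e⁻ᵗ]]`. -/
def gDiag (t : ℝ) : SL2R :=
  ⟨!![Real.exp t, 0; 0, Real.exp (-t)], by
    simp [Matrix.det_fin_two_of, ← Real.exp_add]⟩

/-- The upper unipotent matrix `u_x = [[1, x], [0, 1]]`. -/
def uMat (x : ℝ) : SL2R :=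
  ⟨!![1, x; 0, 1], by simp [Matrix.det_fin_two_of]⟩

/-- The lower unipotent matrix `v_y = [[1, 0], [y, 1]]`. -/
def vMat (y : ℝ) : SL2R :=
  ⟨!![1, 0; y, 1], by simp [Matrix.det_fin_two_of]⟩

/-- The lattice `Λ_α = u_α ℤ²` as a point of `X`. -/
def LatX (α : ℝ) : XSpace := QuotientGroup.mk (uMat α)

/-- The full diagonal orbit `g_ℝ x = {g_t x : t ∈ ℝ}`. -/
def fullOrbit (x : XSpace) : Set XSpace := {y | ∃ t : ℝ, y = gDiag t • x}

/-- The forward diagonal orbit `g_{ℝ>0} x = {g_t x : t > 0}`. -/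
def fwdOrbit (x : XSpace) : Set XSpace := {y | ∃ t : ℝ, 0 < t ∧ y = gDiag t • x}

/-- The backward diagonal orbit `g_{ℝ<0} x = {g_t x : t < 0}`. -/
def bwdOrbit (x : XSpace) : Set XSpace := {y | ∃ t : ℝ, t < 0 ∧ y = gDiag t • x}

/-- A real number `α` is badly approximable if
`inf {q·|qα − p| : p ∈ ℤ, q ∈ ℤ, q ≥ 1} > 0`. -/
def BadlyApproximable (α : ℝ) : Prop :=
  ∃ ε > (0 : ℝ), ∀ p q : ℤ, 1 ≤ q → ε ≤ (q : ℝ) * |(q : ℝ) * α - (p : ℝ)|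


namespace Dani

/-- sup norm of a vector in ℝ². -/
def vn (x : Fin 2 → ℝ) : ℝ := max |x 0| |x 1|

lemma vn_nonneg (x : Fin 2 → ℝ) : 0 ≤ vn x :=
  le_trans (abs_nonneg _) (le_max_left _ _)

/-- max row-sum operator bound of a 2×2 matrix. -/
def ob (A : Matrix (Fin 2) (Fin 2) ℝ) : ℝ :=
  max (|A 0 0| + |A 0 1|) (|A 1 0| + |A 1 1|)

lemma ob_nonneg (A : Matrix (Fin 2) (Fin 2) ℝ) : 0 ≤ ob A :=
  le_trans (add_nonneg (abs_nonneg _) (abs_nonneg _)) (le_max_left _ _)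

lemma mulVec_apply0 (A : Matrix (Fin 2) (Fin 2) ℝ) (x : Fin 2 → ℝ) :
    A.mulVec x 0 = A 0 0 * x 0 + A 0 1 * x 1 := by
  simp [Matrix.mulVec, dotProduct, Fin.sum_univ_two]

lemma mulVec_apply1 (A : Matrix (Fin 2) (Fin 2) ℝ) (x : Fin 2 → ℝ) :
    A.mulVec x 1 = A 1 0 * x 0 + A 1 1 * x 1 := by
  simp [Matrix.mulVec, dotProduct, Fin.sum_univ_two]

lemma vn_mulVec_le (A : Matrix (Fin 2) (Fin 2) ℝ) (x : Fin 2 → ℝ) :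
    vn (A.mulVec x) ≤ ob A * vn x := by
  have h0 : |x 0| ≤ vn x := le_max_left _ _
  have h1 : |x 1| ≤ vn x := le_max_right _ _
  have key : ∀ a b : ℝ, |a * x 0 + b * x 1| ≤ (|a| + |b|) * vn x := by
    intro a b
    have h2 := abs_add_le (a * x 0) (b * x 1)
    rw [abs_mul, abs_mul] at h2
    nlinarith [abs_nonneg a, abs_nonneg b, abs_nonneg (x 0), abs_nonneg (x 1)]
  have e0 : |A.mulVec x 0| ≤ (|A 0 0| + |A 0 1|) * vn x := by
    rw [mulVec_apply0]; exact key _ _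
  have e1 : |A.mulVec x 1| ≤ (|A 1 0| + |A 1 1|) * vn x := by
    rw [mulVec_apply1]; exact key _ _
  refine max_le (le_trans e0 ?_) (le_trans e1 ?_)
  · exact mul_le_mul_of_nonneg_right (le_max_left _ _) (vn_nonneg x)
  · exact mul_le_mul_of_nonneg_right (le_max_right _ _) (vn_nonneg x)

lemma one_le_ob_of_det (A : Matrix (Fin 2) (Fin 2) ℝ) (h : A.det = 1) : 1 ≤ ob A := by
  rw [Matrix.det_fin_two] at h
  by_contra hc
  push_neg at hc
  have h1 : |A 0 0| + |A 0 1| < 1 := lt_of_le_of_lt (le_max_left _ _) hc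
  have h2 : |A 1 0| + |A 1 1| < 1 := lt_of_le_of_lt (le_max_right _ _) hc
  have hd : |A 0 0 * A 1 1 - A 0 1 * A 1 0| ≤ |A 0 0| * |A 1 1| + |A 0 1| * |A 1 0| := by
    calc |A 0 0 * A 1 1 - A 0 1 * A 1 0| ≤ |A 0 0 * A 1 1| + |A 0 1 * A 1 0| := abs_sub _ _
    _ = _ := by rw [abs_mul, abs_mul]
  rw [h, abs_one] at hd
  nlinarith [abs_nonneg (A 0 0), abs_nonneg (A 0 1), abs_nonneg (A 1 0), abs_nonneg (A 1 1)]

end Dani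

namespace Dani

/-- cast of an integer vector to ℝ². -/
def cv (v : Fin 2 → ℤ) : Fin 2 → ℝ := fun i => (v i : ℝ)

lemma one_le_vn_cv {v : Fin 2 → ℤ} (hv : v ≠ 0) : 1 ≤ vn (cv v) := by
  have : ∃ i, v i ≠ 0 := by
    by_contra h
    push_neg at h
    exact hv (funext h)
  obtain ⟨i, hi⟩ := this
  have h1 : (1 : ℝ) ≤ |(v i : ℝ)| := by
    rw [← Int.cast_abs]
    exact_mod_cast Int.one_le_abs hi
  fin_cases i
  · exact le_trans h1 (le_max_left _ _)
  · exact le_trans h1 (le_max_right _ _)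

/-- The set of sup-norms of nonzero lattice vectors of `g ℤ²`. -/
def latS (g : SL2R) : Set ℝ :=
  {r | ∃ v : Fin 2 → ℤ, v ≠ 0 ∧ r = vn ((g : Matrix (Fin 2) (Fin 2) ℝ).mulVec (cv v))}

/-- The systole: length of the shortest nonzero vector of the lattice `g ℤ²`. -/
def sys (g : SL2R) : ℝ := sInf (latS g)

lemma latS_nonempty (g : SL2R) : (latS g).Nonempty := by
  refine ⟨_, ![1, 0], ?_, rfl⟩
  intro h
  have := congrFun h 0
  simp at this

lemma latS_bddBelow (g : SL2R) : BddBelow (latS g) := by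
  refine ⟨0, ?_⟩
  rintro r ⟨v, hv, rfl⟩
  exact vn_nonneg _

lemma sys_le (g : SL2R) {v : Fin 2 → ℤ} (hv : v ≠ 0) :
    sys g ≤ vn ((g : Matrix (Fin 2) (Fin 2) ℝ).mulVec (cv v)) :=
  csInf_le (latS_bddBelow g) ⟨v, hv, rfl⟩

lemma adj_mulVec_cancel (g : SL2R) (x : Fin 2 → ℝ) :
    (Matrix.adjugate (g : Matrix (Fin 2) (Fin 2) ℝ)).mulVec
      ((g : Matrix (Fin 2) (Fin 2) ℝ).mulVec x) = x := by
  rw [Matrix.mulVec_mulVec, Matrix.adjugate_mul, g.2, one_smul, Matrix.one_mulVec]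

lemma mem_latS_ge (g : SL2R) {r : ℝ} (hr : r ∈ latS g) :
    1 ≤ ob (Matrix.adjugate (g : Matrix (Fin 2) (Fin 2) ℝ)) * r := by
  obtain ⟨v, hv, rfl⟩ := hr
  calc (1 : ℝ) ≤ vn (cv v) := one_le_vn_cv hv
  _ = vn ((Matrix.adjugate (g : Matrix (Fin 2) (Fin 2) ℝ)).mulVec
      ((g : Matrix (Fin 2) (Fin 2) ℝ).mulVec (cv v))) := by rw [adj_mulVec_cancel]
  _ ≤ _ := vn_mulVec_le _ _

lemma ob_adj_pos (g : SL2R) : 0 < ob (Matrix.adjugate (g : Matrix (Fin 2) (Fin 2) ℝ)) := by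
  have h : (Matrix.adjugate (g : Matrix (Fin 2) (Fin 2) ℝ)).det = 1 := by
    rw [Matrix.det_adjugate, g.2]
    norm_num
  linarith [one_le_ob_of_det _ h]

lemma sys_pos (g : SL2R) : 0 < sys g := by
  set C := ob (Matrix.adjugate (g : Matrix (Fin 2) (Fin 2) ℝ)) with hC
  have hCpos := ob_adj_pos g
  have : ∀ r ∈ latS g, 1 / C ≤ r := by
    intro r hr
    rw [div_le_iff₀ hCpos]
    have := mem_latS_ge g hr
    linarith [mem_latS_ge g hr]
  have h2 : 1 / C ≤ sys g := le_csInf (latS_nonempty g) this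
  have : 0 < 1 / C := by positivity
  linarith

lemma sys_nonneg (g : SL2R) : 0 ≤ sys g := le_of_lt (sys_pos g)

/-- comparison of systoles. -/
lemma sys_le_mul (g' g : SL2R) :
    sys g' ≤ ob ((g' : Matrix (Fin 2) (Fin 2) ℝ) * Matrix.adjugate (g : Matrix (Fin 2) (Fin 2) ℝ)) * sys g := by
  set C := ob ((g' : Matrix (Fin 2) (Fin 2) ℝ) * Matrix.adjugate (g : Matrix (Fin 2) (Fin 2) ℝ)) with hCdef
  have hC1 : 1 ≤ C := by
    apply one_le_ob_of_det
    rw [Matrix.det_mul, g'.2, Matrix.det_adjugate, g.2]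
    norm_num
  have hCpos : 0 < C := lt_of_lt_of_le one_pos hC1
  have key : ∀ r ∈ latS g, sys g' / C ≤ r := by
    rintro r ⟨v, hv, rfl⟩
    rw [div_le_iff₀ hCpos]
    have e : (g' : Matrix (Fin 2) (Fin 2) ℝ).mulVec (cv v) =
        ((g' : Matrix (Fin 2) (Fin 2) ℝ) * Matrix.adjugate (g : Matrix (Fin 2) (Fin 2) ℝ)).mulVec
          ((g : Matrix (Fin 2) (Fin 2) ℝ).mulVec (cv v)) := by
      rw [← Matrix.mulVec_mulVec, adj_mulVec_cancel]
    calc sys g' ≤ vn ((g' : Matrix (Fin 2) (Fin 2) ℝ).mulVec (cv v)) := sys_le g' hv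
    _ ≤ C * vn ((g : Matrix (Fin 2) (Fin 2) ℝ).mulVec (cv v)) := by
        rw [e]; exact vn_mulVec_le _ _
    _ = vn ((g : Matrix (Fin 2) (Fin 2) ℝ).mulVec (cv v)) * C := mul_comm _ _
  have h2 : sys g' / C ≤ sys g := le_csInf (latS_nonempty g) key
  calc sys g' = sys g' / C * C := by field_simp
  _ ≤ sys g * C := mul_le_mul_of_nonneg_right h2 (le_of_lt hCpos)
  _ = C * sys g := mul_comm _ _

end Dani

namespace Dani

lemma continuous_entry (i j : Fin 2) :
    Continuous fun A : Matrix (Fin 2) (Fin 2) ℝ => A i j :=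
  (continuous_apply j).comp (continuous_apply i)

lemma continuous_ob : Continuous ob := by
  unfold ob
  fun_prop

lemma continuous_coeSL : Continuous fun g : SL2R => (g : Matrix (Fin 2) (Fin 2) ℝ) :=
  continuous_induced_dom

lemma ob_one : ob (1 : Matrix (Fin 2) (Fin 2) ℝ) = 1 := by
  unfold ob
  norm_num

lemma continuous_sys : Continuous sys := by
  rw [continuous_iff_continuousAt]
  intro g₀
  have cU : Continuous fun g : SL2R =>
      ob ((g : Matrix (Fin 2) (Fin 2) ℝ) * Matrix.adjugate (g₀ : Matrix (Fin 2) (Fin 2) ℝ)) :=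
    continuous_ob.comp ((continuous_coeSL.matrix_mul continuous_const))
  have cL : Continuous fun g : SL2R =>
      ob ((g₀ : Matrix (Fin 2) (Fin 2) ℝ) * Matrix.adjugate (g : Matrix (Fin 2) (Fin 2) ℝ)) :=
    continuous_ob.comp (continuous_const.matrix_mul continuous_coeSL.matrix_adjugate)
  have hU0 : ob ((g₀ : Matrix (Fin 2) (Fin 2) ℝ) * Matrix.adjugate (g₀ : Matrix (Fin 2) (Fin 2) ℝ)) = 1 := by
    rw [Matrix.mul_adjugate, g₀.2, one_smul, ob_one]
  have hL1 : ∀ g : SL2R, (1:ℝ) ≤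
      ob ((g₀ : Matrix (Fin 2) (Fin 2) ℝ) * Matrix.adjugate (g : Matrix (Fin 2) (Fin 2) ℝ)) := by
    intro g
    apply one_le_ob_of_det
    rw [Matrix.det_mul, g₀.2, Matrix.det_adjugate, g.2]
    norm_num
  -- squeeze
  have hub : ∀ g : SL2R, sys g ≤
      ob ((g : Matrix (Fin 2) (Fin 2) ℝ) * Matrix.adjugate (g₀ : Matrix (Fin 2) (Fin 2) ℝ)) * sys g₀ :=
    fun g => sys_le_mul g g₀
  have hlb : ∀ g : SL2R, sys g₀ /
      ob ((g₀ : Matrix (Fin 2) (Fin 2) ℝ) * Matrix.adjugate (g : Matrix (Fin 2) (Fin 2) ℝ)) ≤ sys g := by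
    intro g
    rw [div_le_iff₀ (lt_of_lt_of_le one_pos (hL1 g))]
    calc sys g₀ ≤ _ := sys_le_mul g₀ g
    _ = _ := mul_comm _ _
  unfold ContinuousAt
  have t1 : Filter.Tendsto (fun g : SL2R => sys g₀ /
      ob ((g₀ : Matrix (Fin 2) (Fin 2) ℝ) * Matrix.adjugate (g : Matrix (Fin 2) (Fin 2) ℝ)))
      (nhds g₀) (nhds (sys g₀)) := by
    have hne : (fun g : SL2R => ob ((g₀ : Matrix (Fin 2) (Fin 2) ℝ) * Matrix.adjugate (g : Matrix (Fin 2) (Fin 2) ℝ))) g₀ ≠ 0 := by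
      simp only []
      rw [hU0]
      norm_num
    have := (Filter.Tendsto.div (tendsto_const_nhds (x := sys g₀))
      (cL.continuousAt (x := g₀)) hne)
    simp only [ContinuousAt] at this
    rw [hU0] at this
    simpa [Pi.div_def] using this
  have t2 : Filter.Tendsto (fun g : SL2R =>
      ob ((g : Matrix (Fin 2) (Fin 2) ℝ) * Matrix.adjugate (g₀ : Matrix (Fin 2) (Fin 2) ℝ)) * sys g₀)
      (nhds g₀) (nhds (sys g₀)) := by
    have := (cU.continuousAt (x := g₀)).mul (tendsto_const_nhds (x := sys g₀))
    simp only [ContinuousAt] at this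
    simp only [Pi.mul_def, hU0, one_mul] at this
    exact this
  exact tendsto_of_tendsto_of_tendsto_of_le_of_le t1 t2 hlb hub

end Dani

namespace Dani

/-- the real SL₂ element coming from an integral one. -/
def toR (d : Matrix.SpecialLinearGroup (Fin 2) ℤ) : SL2R :=
  Matrix.SpecialLinearGroup.map (n := Fin 2) (Int.castRingHom ℝ) d

lemma toR_mem_Gamma (d : Matrix.SpecialLinearGroup (Fin 2) ℤ) : toR d ∈ Gamma :=
  ⟨d, rfl⟩

lemma coe_toR (d : Matrix.SpecialLinearGroup (Fin 2) ℤ) (i j : Fin 2) :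
    (toR d : Matrix (Fin 2) (Fin 2) ℝ) i j = ((d : Matrix (Fin 2) (Fin 2) ℤ) i j : ℝ) := rfl

lemma mem_Gamma_iff (δ : SL2R) : δ ∈ Gamma ↔
    ∃ d : Matrix.SpecialLinearGroup (Fin 2) ℤ, toR d = δ := Iff.rfl

lemma cast_mulVec (d : Matrix (Fin 2) (Fin 2) ℤ) (v : Fin 2 → ℤ) :
    (d.map (Int.cast : ℤ → ℝ)).mulVec (cv v) = cv (d.mulVec v) := by
  funext i
  have := (RingHom.map_mulVec (Int.castRingHom ℝ) d v i).symm
  simpa [cv, Function.comp] using this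

lemma intSL_mulVec_ne_zero (d : Matrix.SpecialLinearGroup (Fin 2) ℤ) {v : Fin 2 → ℤ}
    (hv : v ≠ 0) : (d : Matrix (Fin 2) (Fin 2) ℤ).mulVec v ≠ 0 := by
  intro h
  apply hv
  have : (Matrix.adjugate (d : Matrix (Fin 2) (Fin 2) ℤ)).mulVec
      ((d : Matrix (Fin 2) (Fin 2) ℤ).mulVec v) = v := by
    rw [Matrix.mulVec_mulVec, Matrix.adjugate_mul, d.2, one_smul, Matrix.one_mulVec]
  rw [h, Matrix.mulVec_zero] at this
  exact this.symm

lemma latS_mul_toR (g : SL2R) (d : Matrix.SpecialLinearGroup (Fin 2) ℤ) :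
    latS (g * toR d) = latS g := by
  have key : ∀ (w : Fin 2 → ℤ),
      ((g * toR d : SL2R) : Matrix (Fin 2) (Fin 2) ℝ).mulVec (cv w)
        = (g : Matrix (Fin 2) (Fin 2) ℝ).mulVec (cv ((d : Matrix (Fin 2) (Fin 2) ℤ).mulVec w)) := by
    intro w
    have hc : ((g * toR d : SL2R) : Matrix (Fin 2) (Fin 2) ℝ)
        = (g : Matrix (Fin 2) (Fin 2) ℝ) * ((d : Matrix (Fin 2) (Fin 2) ℤ).map (Int.cast : ℤ → ℝ)) := rfl
    rw [hc, ← Matrix.mulVec_mulVec, cast_mulVec]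
  ext r
  constructor
  · rintro ⟨v, hv, rfl⟩
    exact ⟨(d : Matrix (Fin 2) (Fin 2) ℤ).mulVec v, intSL_mulVec_ne_zero d hv, by rw [key]⟩
  · rintro ⟨v, hv, rfl⟩
    refine ⟨((d⁻¹ : Matrix.SpecialLinearGroup (Fin 2) ℤ) : Matrix (Fin 2) (Fin 2) ℤ).mulVec v,
      intSL_mulVec_ne_zero _ hv, ?_⟩
    rw [key, Matrix.mulVec_mulVec]
    have : (d : Matrix (Fin 2) (Fin 2) ℤ) * ((d⁻¹ : Matrix.SpecialLinearGroup (Fin 2) ℤ) : Matrix (Fin 2) (Fin 2) ℤ) = 1 := by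
      have := mul_inv_cancel d
      exact_mod_cast congrArg (Subtype.val) this
    rw [this, Matrix.one_mulVec]

lemma sys_mul_gamma (g δ : SL2R) (hδ : δ ∈ Gamma) : sys (g * δ) = sys g := by
  obtain ⟨d, rfl⟩ := hδ
  exact congrArg sInf (latS_mul_toR g d)

/-- The systole descends to `X`. -/
def sysX : XSpace → ℝ := fun x =>
  Quotient.liftOn' x sys (by
    intro a b hab
    rw [QuotientGroup.leftRel_apply] at hab
    have : b = a * (a⁻¹ * b) := by group
    rw [this, sys_mul_gamma a _ hab])

lemma sysX_mk (g : SL2R) : sysX (QuotientGroup.mk g) = sys g := rfl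

lemma continuous_sysX : Continuous sysX :=
  Continuous.quotient_liftOn' continuous_sys _

lemma sysX_pos (x : XSpace) : 0 < sysX x := by
  obtain ⟨g, rfl⟩ := Quotient.exists_rep x
  exact sys_pos g

end Dani

namespace Dani

open Complex UpperHalfPlane

/-- first-column complex number `a + c i`. -/
def w1 (h : SL2R) : ℂ :=
  ((h : Matrix (Fin 2) (Fin 2) ℝ) 0 0 : ℝ) + ((h : Matrix (Fin 2) (Fin 2) ℝ) 1 0 : ℝ) * Complex.I

/-- second-column complex number `b + d i`. -/
def w2 (h : SL2R) : ℂ :=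
  ((h : Matrix (Fin 2) (Fin 2) ℝ) 0 1 : ℝ) + ((h : Matrix (Fin 2) (Fin 2) ℝ) 1 1 : ℝ) * Complex.I

lemma det_entries (h : SL2R) :
    (h : Matrix (Fin 2) (Fin 2) ℝ) 0 0 * (h : Matrix (Fin 2) (Fin 2) ℝ) 1 1
      - (h : Matrix (Fin 2) (Fin 2) ℝ) 0 1 * (h : Matrix (Fin 2) (Fin 2) ℝ) 1 0 = 1 := by
  have := h.2
  rwa [Matrix.det_fin_two] at this

lemma w1_ne_zero (h : SL2R) : w1 h ≠ 0 := by
  intro H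
  unfold w1 at H
  rw [Complex.ext_iff] at H
  simp at H
  have := det_entries h
  rw [H.1, H.2] at this
  simp at this

/-- the point `z(h) = w2/w1` of the upper half plane. -/
def zc (h : SL2R) : ℂ := w2 h / w1 h

lemma zc_mul_w1 (h : SL2R) : zc h * w1 h = w2 h :=
  div_mul_cancel₀ _ (w1_ne_zero h)

lemma sq_add_sq_pos (h : SL2R) :
    0 < (h : Matrix (Fin 2) (Fin 2) ℝ) 0 0 ^ 2 + (h : Matrix (Fin 2) (Fin 2) ℝ) 1 0 ^ 2 := by
  rcases eq_or_ne ((h : Matrix (Fin 2) (Fin 2) ℝ) 0 0) 0 with h0 | h0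
  · have := det_entries h
    rcases eq_or_ne ((h : Matrix (Fin 2) (Fin 2) ℝ) 1 0) 0 with h1 | h1
    · rw [h0, h1] at this; simp at this
    · positivity
  · positivity

lemma zc_im (h : SL2R) :
    (zc h).im = 1 / ((h : Matrix (Fin 2) (Fin 2) ℝ) 0 0 ^ 2 + (h : Matrix (Fin 2) (Fin 2) ℝ) 1 0 ^ 2) := by
  set a := (h : Matrix (Fin 2) (Fin 2) ℝ) 0 0
  set b := (h : Matrix (Fin 2) (Fin 2) ℝ) 0 1
  set c := (h : Matrix (Fin 2) (Fin 2) ℝ) 1 0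
  set d := (h : Matrix (Fin 2) (Fin 2) ℝ) 1 1
  have key := zc_mul_w1 h
  unfold w1 w2 at key
  rw [Complex.ext_iff] at key
  simp only [Complex.add_re, Complex.add_im, Complex.mul_re, Complex.mul_im,
    Complex.ofReal_re, Complex.ofReal_im, Complex.I_re, Complex.I_im] at key
  obtain ⟨k1, k2⟩ := key
  have hdet := det_entries h
  have hpos := sq_add_sq_pos h
  rw [eq_div_iff (ne_of_gt hpos)]
  linear_combination a * k2 - c * k1 + hdet

lemma zc_im_pos (h : SL2R) : 0 < (zc h).im := by
  rw [zc_im]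
  exact one_div_pos.mpr (sq_add_sq_pos h)

/-- the point of `ℍ` attached to `h`. -/
def zh (h : SL2R) : UpperHalfPlane := UpperHalfPlane.mk (zc h) (zc_im_pos h)

lemma normSq_w1 (h : SL2R) :
    Complex.normSq (w1 h) =
      (h : Matrix (Fin 2) (Fin 2) ℝ) 0 0 ^ 2 + (h : Matrix (Fin 2) (Fin 2) ℝ) 1 0 ^ 2 :=
  Complex.normSq_add_mul_I _ _

lemma normSq_w2 (h : SL2R) :
    Complex.normSq (w2 h) =
      (h : Matrix (Fin 2) (Fin 2) ℝ) 0 1 ^ 2 + (h : Matrix (Fin 2) (Fin 2) ℝ) 1 1 ^ 2 :=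
  Complex.normSq_add_mul_I _ _

lemma normSq_zc (h : SL2R) :
    Complex.normSq (zc h) * ((h : Matrix (Fin 2) (Fin 2) ℝ) 0 0 ^ 2 + (h : Matrix (Fin 2) (Fin 2) ℝ) 1 0 ^ 2)
      = (h : Matrix (Fin 2) (Fin 2) ℝ) 0 1 ^ 2 + (h : Matrix (Fin 2) (Fin 2) ℝ) 1 1 ^ 2 := by
  rw [← normSq_w1, ← normSq_w2, ← Complex.normSq_mul, zc_mul_w1]

end Dani

namespace Dani

open Complex UpperHalfPlane

abbrev SL2Z := Matrix.SpecialLinearGroup (Fin 2) ℤ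

/-- the swapped matrix `[[d, b], [c, a]]`, implementing right-column action. -/
def swapSL (γ : SL2Z) : SL2Z :=
  ⟨!![(γ : Matrix (Fin 2) (Fin 2) ℤ) 1 1, (γ : Matrix (Fin 2) (Fin 2) ℤ) 0 1;
      (γ : Matrix (Fin 2) (Fin 2) ℤ) 1 0, (γ : Matrix (Fin 2) (Fin 2) ℤ) 0 0], by
    have := γ.2
    rw [Matrix.det_fin_two] at this
    rw [Matrix.det_fin_two_of]
    linarith⟩

lemma mul_entry (g h : SL2R) (i j : Fin 2) :
    ((g * h : SL2R) : Matrix (Fin 2) (Fin 2) ℝ) i j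
      = (g : Matrix (Fin 2) (Fin 2) ℝ) i 0 * (h : Matrix (Fin 2) (Fin 2) ℝ) 0 j
        + (g : Matrix (Fin 2) (Fin 2) ℝ) i 1 * (h : Matrix (Fin 2) (Fin 2) ℝ) 1 j := by
  show ((g : Matrix (Fin 2) (Fin 2) ℝ) * (h : Matrix (Fin 2) (Fin 2) ℝ)) i j = _
  rw [Matrix.mul_apply, Fin.sum_univ_two]

lemma swap_entries (γ : SL2Z) :
    ((swapSL γ) : Matrix (Fin 2) (Fin 2) ℤ) 0 0 = (γ : Matrix (Fin 2) (Fin 2) ℤ) 1 1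
    ∧ ((swapSL γ) : Matrix (Fin 2) (Fin 2) ℤ) 0 1 = (γ : Matrix (Fin 2) (Fin 2) ℤ) 0 1
    ∧ ((swapSL γ) : Matrix (Fin 2) (Fin 2) ℤ) 1 0 = (γ : Matrix (Fin 2) (Fin 2) ℤ) 1 0
    ∧ ((swapSL γ) : Matrix (Fin 2) (Fin 2) ℤ) 1 1 = (γ : Matrix (Fin 2) (Fin 2) ℤ) 0 0 := by
  refine ⟨?_, ?_, ?_, ?_⟩ <;> simp [swapSL]

lemma w1_mul_toR (g : SL2R) (d : SL2Z) :
    w1 (g * toR d) = ((d : Matrix (Fin 2) (Fin 2) ℤ) 0 0 : ℝ) * w1 g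
      + ((d : Matrix (Fin 2) (Fin 2) ℤ) 1 0 : ℝ) * w2 g := by
  unfold w1 w2
  rw [mul_entry, mul_entry]
  rw [coe_toR, coe_toR]
  push_cast
  ring

lemma w2_mul_toR (g : SL2R) (d : SL2Z) :
    w2 (g * toR d) = ((d : Matrix (Fin 2) (Fin 2) ℤ) 0 1 : ℝ) * w1 g
      + ((d : Matrix (Fin 2) (Fin 2) ℤ) 1 1 : ℝ) * w2 g := by
  unfold w1 w2
  rw [mul_entry, mul_entry]
  rw [coe_toR, coe_toR]
  push_cast
  ring

lemma coe_smul_int (γ : SL2Z) (z : UpperHalfPlane) :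
    ((γ • z : UpperHalfPlane) : ℂ)
      = (((γ : Matrix (Fin 2) (Fin 2) ℤ) 0 0 : ℝ) * (z : ℂ) + ((γ : Matrix (Fin 2) (Fin 2) ℤ) 0 1 : ℝ))
        / (((γ : Matrix (Fin 2) (Fin 2) ℤ) 1 0 : ℝ) * (z : ℂ) + ((γ : Matrix (Fin 2) (Fin 2) ℤ) 1 1 : ℝ)) := by
  rw [UpperHalfPlane.specialLinearGroup_apply, UpperHalfPlane.coe_mk]
  norm_num [algebraMap_int_eq]

lemma denom_int_ne_zero (γ : SL2Z) (z : UpperHalfPlane) :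
    (((γ : Matrix (Fin 2) (Fin 2) ℤ) 1 0 : ℝ) * (z : ℂ) + ((γ : Matrix (Fin 2) (Fin 2) ℤ) 1 1 : ℝ)) ≠ 0 := by
  intro H
  have him := congrArg Complex.im H
  have hre := congrArg Complex.re H
  simp only [Complex.add_im, Complex.mul_im, Complex.ofReal_re, Complex.ofReal_im,
    Complex.add_re, Complex.mul_re, Complex.zero_im, Complex.zero_re] at him hre
  have hzim : 0 < (z : ℂ).im := z.2
  have hc : ((γ : Matrix (Fin 2) (Fin 2) ℤ) 1 0 : ℝ) = 0 := by
    by_contra hc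
    have : ((γ : Matrix (Fin 2) (Fin 2) ℤ) 1 0 : ℝ) * (z : ℂ).im ≠ 0 :=
      mul_ne_zero hc (ne_of_gt hzim)
    apply this
    linarith
  have hd : ((γ : Matrix (Fin 2) (Fin 2) ℤ) 1 1 : ℝ) = 0 := by
    rw [hc] at hre
    linarith
  have := γ.2
  rw [Matrix.det_fin_two] at this
  have hc' : (γ : Matrix (Fin 2) (Fin 2) ℤ) 1 0 = 0 := by exact_mod_cast hc
  have hd' : (γ : Matrix (Fin 2) (Fin 2) ℤ) 1 1 = 0 := by exact_mod_cast hd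
  rw [hc', hd'] at this
  simp at this

lemma zh_mul_swap (g : SL2R) (γ : SL2Z) :
    zh (g * toR (swapSL γ)) = γ • (zh g) := by
  apply UpperHalfPlane.ext
  obtain ⟨e1, e2, e3, e4⟩ := swap_entries γ
  have hzhg : ((zh g : UpperHalfPlane) : ℂ) = zc g := rfl
  rw [coe_smul_int, hzhg]
  have hL : ((zh (g * toR (swapSL γ)) : UpperHalfPlane) : ℂ) = zc (g * toR (swapSL γ)) := rfl
  rw [hL]
  unfold zc
  rw [w1_mul_toR, w2_mul_toR, e1, e2, e3, e4]
  have h1 : w1 g ≠ 0 := w1_ne_zero g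
  have h2 : (((γ : Matrix (Fin 2) (Fin 2) ℤ) 1 1 : ℝ) : ℂ) * w1 g
      + (((γ : Matrix (Fin 2) (Fin 2) ℤ) 1 0 : ℝ) : ℂ) * w2 g ≠ 0 := by
    have := w1_ne_zero (g * toR (swapSL γ))
    rw [w1_mul_toR, e1, e3] at this
    exact this
  have h3 : (((γ : Matrix (Fin 2) (Fin 2) ℤ) 1 0 : ℝ) : ℂ) * (w2 g / w1 g)
      + (((γ : Matrix (Fin 2) (Fin 2) ℤ) 1 1 : ℝ) : ℂ) ≠ 0 := by
    intro H
    apply h2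
    have := congrArg (· * w1 g) H
    simp only [zero_mul] at this
    rw [add_mul, mul_assoc, div_mul_cancel₀ _ h1] at this
    linear_combination this
  field_simp
  ring

end Dani

namespace Dani

open Complex UpperHalfPlane
open scoped Modular

lemma exists_reduce (g : SL2R) :
    ∃ δ : SL2R, δ ∈ _root_.Gamma ∧ zh (g * δ) ∈ ModularGroup.fd := by
  obtain ⟨γ, hγ⟩ := ModularGroup.exists_smul_mem_fd (zh g)
  exact ⟨toR (swapSL γ), toR_mem_Gamma _, by rw [zh_mul_swap]; exact hγ⟩

lemma abs_le_of_sq (x C : ℝ) (hC : 0 ≤ C) (hx : x ^ 2 ≤ C ^ 2) : |x| ≤ C := by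
  have := Real.sqrt_le_sqrt hx
  rwa [Real.sqrt_sq_eq_abs, Real.sqrt_sq hC] at this

lemma sys_le_col (h : SL2R) :
    sys h ≤ max |(h : Matrix (Fin 2) (Fin 2) ℝ) 0 0| |(h : Matrix (Fin 2) (Fin 2) ℝ) 1 0| := by
  have hv : (![1, 0] : Fin 2 → ℤ) ≠ 0 := by
    intro H
    have := congrFun H 0
    simp at this
  have := sys_le h hv
  have hcv : (cv ![1, 0] : Fin 2 → ℝ) = ![1, 0] := by
    funext i
    fin_cases i <;> simp [cv]
  rw [hcv] at this
  have h0 : (h : Matrix (Fin 2) (Fin 2) ℝ).mulVec ![1, 0] 0 = (h : Matrix (Fin 2) (Fin 2) ℝ) 0 0 := by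
    rw [mulVec_apply0]; simp
  have h1 : (h : Matrix (Fin 2) (Fin 2) ℝ).mulVec ![1, 0] 1 = (h : Matrix (Fin 2) (Fin 2) ℝ) 1 0 := by
    rw [mulVec_apply1]; simp
  unfold vn at this
  rwa [h0, h1] at this

set_option maxHeartbeats 1000000 in
lemma bound_aux {eps a b c d re im : ℝ} (he0 : 0 < eps) (he1 : eps ≤ 1)
    (him : im = 1 / (a ^ 2 + c ^ 2)) (hs_pos : 0 < a ^ 2 + c ^ 2)
    (hns : 1 ≤ re ^ 2 + im ^ 2) (hre : |re| ≤ 1 / 2)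
    (heps : eps ^ 2 ≤ a ^ 2 + c ^ 2)
    (hmain : (re ^ 2 + im ^ 2) * (a ^ 2 + c ^ 2) = b ^ 2 + d ^ 2) :
    |a| ≤ 2 + 2 / eps ^ 2 ∧ |b| ≤ 2 + 2 / eps ^ 2 ∧ |c| ≤ 2 + 2 / eps ^ 2
      ∧ |d| ≤ 2 + 2 / eps ^ 2 := by
  have hC : (0 : ℝ) ≤ 2 + 2 / eps ^ 2 := by positivity
  have hinv : (0 : ℝ) < 1 / eps ^ 2 := by positivity
  have hs_le : a ^ 2 + c ^ 2 ≤ 2 := by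
    have h34 : im ^ 2 ≥ 3 / 4 := by nlinarith [sq_nonneg re, abs_le.mp hre]
    rw [him] at h34
    by_contra hcon
    push_neg at hcon
    have hu : 1 / (a ^ 2 + c ^ 2) < 1 / 2 := one_div_lt_one_div_of_lt two_pos hcon
    have hu0 : 0 < 1 / (a ^ 2 + c ^ 2) := by positivity
    nlinarith
  have hbd : b ^ 2 + d ^ 2 ≤ 1 / 2 + 1 / eps ^ 2 := by
    have h1 : re ^ 2 ≤ 1 / 4 := by nlinarith [abs_le.mp hre]
    have h2 : im ^ 2 * (a ^ 2 + c ^ 2) = 1 / (a ^ 2 + c ^ 2) := by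
      rw [him]; field_simp
    have h3 : 1 / (a ^ 2 + c ^ 2) ≤ 1 / eps ^ 2 := by
      apply one_div_le_one_div_of_le
      · positivity
      · exact heps
    nlinarith [sq_nonneg re, sq_nonneg im]
  have hexp : (2 + 2 / eps ^ 2) ^ 2 = 4 + 4 * (2 / eps ^ 2) + (2 / eps ^ 2) ^ 2 := by ring
  have ht : (0 : ℝ) < 2 / eps ^ 2 := by positivity
  have ht2 : (1 : ℝ) / eps ^ 2 = (2 / eps ^ 2) / 2 := by ring
  have hC2 : 4 ≤ (2 + 2 / eps ^ 2) ^ 2 := by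
    rw [hexp]; nlinarith [ht, sq_nonneg (2 / eps ^ 2)]
  have hC3 : 1 / 2 + 1 / eps ^ 2 ≤ (2 + 2 / eps ^ 2) ^ 2 := by
    rw [hexp, ht2]; nlinarith [ht, sq_nonneg (2 / eps ^ 2)]
  refine ⟨?_, ?_, ?_, ?_⟩
  · exact abs_le_of_sq _ _ hC (by nlinarith [sq_nonneg c])
  · exact abs_le_of_sq _ _ hC (by nlinarith [sq_nonneg d])
  · exact abs_le_of_sq _ _ hC (by nlinarith [sq_nonneg a])
  · exact abs_le_of_sq _ _ hC (by nlinarith [sq_nonneg b])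

set_option maxHeartbeats 1000000 in
lemma entries_bounded {ε : ℝ} (hε0 : 0 < ε) (hε1 : ε ≤ 1) (h : SL2R)
    (hsys : ε ≤ sys h) (hfd : zh h ∈ ModularGroup.fd) :
    ∀ i j, |(h : Matrix (Fin 2) (Fin 2) ℝ) i j| ≤ 2 + 2 / ε ^ 2 := by
  obtain ⟨hns, hre⟩ := hfd
  have hreval : (zh h).re = (zc h).re := rfl
  have hcoe : ((zh h : UpperHalfPlane) : ℂ) = zc h := rfl
  rw [hreval] at hre
  rw [hcoe] at hns
  have hnormSq : Complex.normSq (zc h) = (zc h).re ^ 2 + (zc h).im ^ 2 := by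
    rw [Complex.normSq_apply]; ring
  rw [hnormSq] at hns
  have him := zc_im h
  have hs_pos := sq_add_sq_pos h
  have hmax : ε ≤ max |(h : Matrix (Fin 2) (Fin 2) ℝ) 0 0| |(h : Matrix (Fin 2) (Fin 2) ℝ) 1 0| :=
    le_trans hsys (sys_le_col h)
  have heps_s : ε ^ 2 ≤ (h : Matrix (Fin 2) (Fin 2) ℝ) 0 0 ^ 2 + (h : Matrix (Fin 2) (Fin 2) ℝ) 1 0 ^ 2 := by
    have hsq : ε ^ 2 ≤ (max |(h : Matrix (Fin 2) (Fin 2) ℝ) 0 0| |(h : Matrix (Fin 2) (Fin 2) ℝ) 1 0|) ^ 2 :=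
      pow_le_pow_left₀ hε0.le hmax 2
    rcases max_cases |(h : Matrix (Fin 2) (Fin 2) ℝ) 0 0| |(h : Matrix (Fin 2) (Fin 2) ℝ) 1 0| with ⟨hm, _⟩ | ⟨hm, _⟩ <;>
      rw [hm] at hsq <;>
      nlinarith [_root_.sq_abs ((h : Matrix (Fin 2) (Fin 2) ℝ) 0 0),
        _root_.sq_abs ((h : Matrix (Fin 2) (Fin 2) ℝ) 1 0),
        sq_nonneg ((h : Matrix (Fin 2) (Fin 2) ℝ) 0 0),
        sq_nonneg ((h : Matrix (Fin 2) (Fin 2) ℝ) 1 0)]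
  have hmain := normSq_zc h
  rw [hnormSq] at hmain
  obtain ⟨b1, b2, b3, b4⟩ := bound_aux hε0 hε1 him hs_pos hns hre heps_s hmain
  intro i j
  fin_cases i <;> fin_cases j
  · exact b1
  · exact b2
  · exact b3
  · exact b4

end Dani

namespace Dani

lemma closedEmbedding_coeSL :
    Topology.IsClosedEmbedding (fun g : SL2R => (g : Matrix (Fin 2) (Fin 2) ℝ)) := by
  refine ⟨⟨⟨rfl⟩, fun g g' hgg' => Subtype.ext hgg'⟩, ?_⟩
  have : Set.range (fun g : SL2R => (g : Matrix (Fin 2) (Fin 2) ℝ))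
      = {A : Matrix (Fin 2) (Fin 2) ℝ | A.det = 1} := by
    ext A
    constructor
    · rintro ⟨g, rfl⟩
      exact g.2
    · intro hA
      exact ⟨⟨A, hA⟩, rfl⟩
  rw [this]
  exact isClosed_eq (Continuous.matrix_det continuous_id) continuous_const

/-- the (compact) set of matrices in `SL₂(ℝ)` with entries bounded by `C`. -/
def box (C : ℝ) : Set SL2R := {g | ∀ i j, |(g : Matrix (Fin 2) (Fin 2) ℝ) i j| ≤ C}

lemma box_compact (C : ℝ) : IsCompact (box C) := by
  have h1 : IsCompact {A : Matrix (Fin 2) (Fin 2) ℝ | ∀ i j, A i j ∈ Set.Icc (-C) C} := by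
    have : {A : Matrix (Fin 2) (Fin 2) ℝ | ∀ i j, A i j ∈ Set.Icc (-C) C}
        = Set.pi Set.univ (fun _ : Fin 2 => {row : Fin 2 → ℝ | ∀ j, row j ∈ Set.Icc (-C) C}) := by
      ext A
      exact ⟨fun h i _ => h i, fun h i => h i (Set.mem_univ i)⟩
    rw [this]
    apply isCompact_univ_pi
    intro i
    have : {row : Fin 2 → ℝ | ∀ j, row j ∈ Set.Icc (-C) C}
        = Set.pi Set.univ (fun _ : Fin 2 => Set.Icc (-C) C) := by
      ext row
      rw [Set.mem_univ_pi]
      exact Iff.rfl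
    rw [this]
    exact isCompact_univ_pi fun _ => isCompact_Icc
  have h2 : box C = (fun g : SL2R => (g : Matrix (Fin 2) (Fin 2) ℝ)) ⁻¹'
      {A : Matrix (Fin 2) (Fin 2) ℝ | ∀ i j, A i j ∈ Set.Icc (-C) C} := by
    ext g
    simp only [box, Set.mem_setOf_eq, Set.mem_preimage, Set.mem_Icc]
    constructor
    · intro hg i j
      exact abs_le.mp (hg i j)
    · intro hg i j
      exact abs_le.mpr (hg i j)
  rw [h2]
  exact closedEmbedding_coeSL.isCompact_preimage h1

lemma continuous_mkX : Continuous (QuotientGroup.mk : SL2R → XSpace) :=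
  continuous_quot_mk

/-- The key compactness statement: sublevel sets of the systole are compact. -/
lemma sublevel_compact {ε : ℝ} (hε0 : 0 < ε) (hε1 : ε ≤ 1) :
    IsCompact {x : XSpace | ε ≤ sysX x} := by
  have hsub : {x : XSpace | ε ≤ sysX x} ⊆
      (QuotientGroup.mk : SL2R → XSpace) '' box (2 + 2 / ε ^ 2) := by
    intro x hx
    obtain ⟨g, rfl⟩ := Quotient.exists_rep x
    have hx' : ε ≤ sys g := hx
    obtain ⟨δ, hδΓ, hδfd⟩ := exists_reduce g
    have hsys' : ε ≤ sys (g * δ) := by rwa [sys_mul_gamma g δ hδΓ]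
    have hbox : g * δ ∈ box (2 + 2 / ε ^ 2) :=
      fun i j => entries_bounded hε0 hε1 (g * δ) hsys' hδfd i j
    refine ⟨g * δ, hbox, ?_⟩
    exact QuotientGroup.mk_mul_of_mem g hδΓ
  have himg : IsCompact ((QuotientGroup.mk : SL2R → XSpace) '' box (2 + 2 / ε ^ 2)) :=
    (box_compact _).image continuous_mkX
  have hclosed : IsClosed {x : XSpace | ε ≤ sysX x} :=
    isClosed_le continuous_const continuous_sysX
  exact IsCompact.of_isClosed_subset himg hclosed hsub

end Dani

namespace Dani

lemma orbitMat (t α : ℝ) :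
    ((gDiag t * uMat α : SL2R) : Matrix (Fin 2) (Fin 2) ℝ)
      = !![Real.exp t, Real.exp t * α; 0, Real.exp (-t)] := by
  show ((gDiag t : SL2R) : Matrix (Fin 2) (Fin 2) ℝ) * ((uMat α : SL2R) : Matrix (Fin 2) (Fin 2) ℝ) = _
  show (!![Real.exp t, 0; 0, Real.exp (-t)] : Matrix (Fin 2) (Fin 2) ℝ) * !![1, α; 0, 1] = _
  rw [Matrix.mul_fin_two]
  congr 1 <;> ring

lemma orbit_coord0 (t α : ℝ) (v : Fin 2 → ℤ) :
    ((gDiag t * uMat α : SL2R) : Matrix (Fin 2) (Fin 2) ℝ).mulVec (cv v) 0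
      = Real.exp t * ((v 0 : ℝ) + α * (v 1 : ℝ)) := by
  rw [mulVec_apply0, orbitMat]
  show Real.exp t * (v 0 : ℝ) + Real.exp t * α * (v 1 : ℝ) = _
  ring

lemma orbit_coord1 (t α : ℝ) (v : Fin 2 → ℤ) :
    ((gDiag t * uMat α : SL2R) : Matrix (Fin 2) (Fin 2) ℝ).mulVec (cv v) 1
      = Real.exp (-t) * (v 1 : ℝ) := by
  rw [mulVec_apply1, orbitMat]
  show 0 * (v 0 : ℝ) + Real.exp (-t) * (v 1 : ℝ) = _
  ring

lemma smul_mkX (g h : SL2R) :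
    (g • (QuotientGroup.mk h : XSpace)) = QuotientGroup.mk (g * h) := rfl

lemma fwdOrbit_pt (α t : ℝ) (ht : 0 < t) :
    (QuotientGroup.mk (gDiag t * uMat α) : XSpace) ∈ fwdOrbit (LatX α) :=
  ⟨t, ht, by rw [LatX, smul_mkX]⟩

/-- BA numbers give a lower systole bound along the forward orbit. -/
lemma sys_orbit_ge {α ε1 : ℝ} (hε1pos : 0 < ε1) (hε11 : ε1 ≤ 1)
    (hBA : ∀ m n : ℤ, n ≠ 0 → ε1 ≤ |(n : ℝ)| * |(n : ℝ) * α + (m : ℝ)|)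
    {t : ℝ} (ht : 0 < t) :
    Real.sqrt ε1 ≤ sys (gDiag t * uMat α) := by
  apply le_csInf (latS_nonempty _)
  rintro r ⟨v, hv, rfl⟩
  set x0 := ((gDiag t * uMat α : SL2R) : Matrix (Fin 2) (Fin 2) ℝ).mulVec (cv v) 0 with hx0
  set x1 := ((gDiag t * uMat α : SL2R) : Matrix (Fin 2) (Fin 2) ℝ).mulVec (cv v) 1 with hx1
  have hvn : vn (((gDiag t * uMat α : SL2R) : Matrix (Fin 2) (Fin 2) ℝ).mulVec (cv v)) = max |x0| |x1| := rfl
  rw [hvn]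
  have he0 : x0 = Real.exp t * ((v 0 : ℝ) + α * (v 1 : ℝ)) := orbit_coord0 t α v
  have he1 : x1 = Real.exp (-t) * (v 1 : ℝ) := orbit_coord1 t α v
  rcases eq_or_ne (v 1) 0 with hn | hn
  · -- second coordinate of v vanishes
    have hm : v 0 ≠ 0 := by
      intro hm
      apply hv
      funext i
      fin_cases i
      · exact hm
      · exact hn
    have h1le : (1 : ℝ) ≤ |x0| := by
      rw [he0, hn]
      push_cast
      rw [mul_zero, add_zero, abs_mul, Real.abs_exp]
      have hv0 : (1 : ℝ) ≤ |(v 0 : ℝ)| := by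
        rw [← Int.cast_abs]
        exact_mod_cast Int.one_le_abs hm
      nlinarith [Real.one_le_exp ht.le]
    calc Real.sqrt ε1 ≤ 1 := by
          rw [show (1 : ℝ) = Real.sqrt 1 by rw [Real.sqrt_one]]
          exact Real.sqrt_le_sqrt hε11
    _ ≤ |x0| := h1le
    _ ≤ max |x0| |x1| := le_max_left _ _
  · -- second coordinate nonzero: use badly approximable bound
    have hprod : ε1 ≤ |x0| * |x1| := by
      have : |x0| * |x1| = |(v 1 : ℝ)| * |(v 1 : ℝ) * α + (v 0 : ℝ)| := by
        rw [he0, he1, abs_mul, abs_mul, Real.abs_exp, Real.abs_exp]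
        rw [show ∀ w z u y : ℝ, w * z * (u * y) = (w * u) * (z * y) from fun _ _ _ _ => by ring]
        rw [← Real.exp_add]
        rw [add_neg_cancel, Real.exp_zero, one_mul]
        rw [show (v 0 : ℝ) + α * (v 1 : ℝ) = (v 1 : ℝ) * α + (v 0 : ℝ) from by ring]
        ring
      rw [this]
      exact hBA (v 0) (v 1) hn
    have hmax0 : 0 ≤ max |x0| |x1| := le_trans (abs_nonneg _) (le_max_left _ _)
    have hsq : ε1 ≤ (max |x0| |x1|) ^ 2 := by
      have h0 : |x0| ≤ max |x0| |x1| := le_max_left _ _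
      have h1 : |x1| ≤ max |x0| |x1| := le_max_right _ _
      nlinarith [abs_nonneg x0, abs_nonneg x1]
    calc Real.sqrt ε1 ≤ Real.sqrt ((max |x0| |x1|) ^ 2) := Real.sqrt_le_sqrt hsq
    _ = max |x0| |x1| := Real.sqrt_sq hmax0

/-- forward implication. -/
lemma forward {α : ℝ} (hBA : BadlyApproximable α) :
    IsCompact (closure (fwdOrbit (LatX α))) := by
  obtain ⟨ε, hε, hba⟩ := hBA
  set ε1 := min ε 1 with hε1def
  have hε1pos : 0 < ε1 := lt_min hε one_pos
  have hε11 : ε1 ≤ 1 := min_le_right _ _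
  have hBA' : ∀ m n : ℤ, n ≠ 0 → ε1 ≤ |(n : ℝ)| * |(n : ℝ) * α + (m : ℝ)| := by
    intro m n hn
    have hle : ε1 ≤ ε := min_le_left _ _
    rcases lt_or_gt_of_ne hn with hneg | hpos
    · have h := hba m (-n) (by omega)
      push_cast at h
      rw [show (-(n : ℝ)) * α - (m : ℝ) = -((n : ℝ) * α + m) from by ring, abs_neg] at h
      have : |(n : ℝ)| = -(n : ℝ) := by
        rw [abs_of_neg]
        exact_mod_cast hneg
      rw [this]
      linarith
    · have h := hba (-m) n (by omega)
      push_cast at h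
      rw [show (n : ℝ) * α - (-(m : ℝ)) = (n : ℝ) * α + m from by ring] at h
      have : |(n : ℝ)| = (n : ℝ) := by
        rw [abs_of_pos]
        exact_mod_cast hpos
      rw [this]
      linarith
  set ε' := Real.sqrt ε1 with hε'def
  have hε'pos : 0 < ε' := Real.sqrt_pos.mpr hε1pos
  have hε'1 : ε' ≤ 1 := by
    rw [hε'def, show (1 : ℝ) = Real.sqrt 1 from (Real.sqrt_one).symm]
    exact Real.sqrt_le_sqrt hε11
  have hsubset : fwdOrbit (LatX α) ⊆ {x : XSpace | ε' ≤ sysX x} := by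
    rintro y ⟨t, ht, rfl⟩
    rw [LatX, smul_mkX]
    show ε' ≤ sysX (QuotientGroup.mk (gDiag t * uMat α))
    rw [sysX_mk]
    exact sys_orbit_ge hε1pos hε11 hBA' ht
  have hcl : closure (fwdOrbit (LatX α)) ⊆ {x : XSpace | ε' ≤ sysX x} :=
    closure_minimal hsubset (isClosed_le continuous_const continuous_sysX)
  exact IsCompact.of_isClosed_subset (sublevel_compact hε'pos hε'1) isClosed_closure hcl

end Dani

namespace Dani

/-- backward implication. -/
lemma backward {α : ℝ} (hK : IsCompact (closure (fwdOrbit (LatX α)))) :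
    BadlyApproximable α := by
  have hne : (closure (fwdOrbit (LatX α))).Nonempty :=
    ⟨_, subset_closure (fwdOrbit_pt α 1 one_pos)⟩
  obtain ⟨x₀, hx₀K, hmin⟩ := hK.exists_isMinOn hne continuous_sysX.continuousOn
  set ε₀ := sysX x₀ with hε₀def
  have hε₀pos : 0 < ε₀ := sysX_pos x₀
  set ε := min ε₀ 1 with hεdef
  have hεpos : 0 < ε := lt_min hε₀pos one_pos
  have hε1 : ε ≤ 1 := min_le_right _ _
  have horb : ∀ t : ℝ, 0 < t → ε ≤ sys (gDiag t * uMat α) := by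
    intro t ht
    have hx : (QuotientGroup.mk (gDiag t * uMat α) : XSpace) ∈ closure (fwdOrbit (LatX α)) :=
      subset_closure (fwdOrbit_pt α t ht)
    have := hmin hx
    rw [← sysX_mk (gDiag t * uMat α)]
    calc ε ≤ ε₀ := min_le_left _ _
    _ ≤ _ := this
  refine ⟨ε ^ 2 / 2, by positivity, ?_⟩
  intro p q hq
  by_contra hlt
  push_neg at hlt
  set Q := (q : ℝ) with hQdef
  have hQ1 : (1 : ℝ) ≤ Q := by rw [hQdef]; exact_mod_cast hq
  have hQpos : 0 < Q := lt_of_lt_of_le one_pos hQ1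
  set r := |Q * α - (p : ℝ)| with hrdef
  have hr0 : 0 ≤ r := abs_nonneg _
  have hvne : (![-p, q] : Fin 2 → ℤ) ≠ 0 := by
    intro H
    have := congrFun H 1
    simp at this
    omega
  -- given any t > 0, the lattice vector from (-p, q):
  have coord0 : ∀ t : ℝ, ((gDiag t * uMat α : SL2R) : Matrix (Fin 2) (Fin 2) ℝ).mulVec (cv ![-p, q]) 0
      = Real.exp t * (Q * α - (p : ℝ)) := by
    intro t
    rw [orbit_coord0]
    show Real.exp t * ((((-p : ℤ) : ℝ)) + α * ((q : ℤ) : ℝ)) = _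
    push_cast
    ring
  have coord1 : ∀ t : ℝ, ((gDiag t * uMat α : SL2R) : Matrix (Fin 2) (Fin 2) ℝ).mulVec (cv ![-p, q]) 1
      = Real.exp (-t) * Q := by
    intro t
    rw [orbit_coord1]
    show Real.exp (-t) * ((q : ℤ) : ℝ) = _
    push_cast
    ring
  have main : ∀ t : ℝ, 0 < t →
      Real.exp t * r < ε → Real.exp (-t) * Q < ε → False := by
    intro t ht h0 h1
    have hsys := horb t ht
    have hle := sys_le (gDiag t * uMat α) hvne
    have hvn : vn (((gDiag t * uMat α : SL2R) : Matrix (Fin 2) (Fin 2) ℝ).mulVec (cv ![-p, q]))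
        < ε := by
      apply max_lt
      · rw [coord0, abs_mul, Real.abs_exp]
        rw [← hrdef]
        exact h0
      · rw [coord1, abs_mul, Real.abs_exp, abs_of_pos hQpos]
        exact h1
    linarith
  rcases eq_or_lt_of_le hr0 with hr | hr
  · -- r = 0
    set t := Real.log (2 * Q / ε) with htdef
    have harg : 1 < 2 * Q / ε := by
      rw [lt_div_iff₀ hεpos]
      nlinarith
    have ht : 0 < t := Real.log_pos harg
    have hexp : Real.exp t = 2 * Q / ε := Real.exp_log (by positivity)
    apply main t ht
    · rw [← hr, mul_zero]
      exact hεpos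
    · have : Real.exp (-t) = ε / (2 * Q) := by
        rw [Real.exp_neg, hexp]
        field_simp
      rw [this, div_mul_eq_mul_div, div_lt_iff₀ (by positivity)]
      nlinarith
  · -- r > 0
    have hrQ : Q * r < ε ^ 2 / 2 := by
      rw [hrdef]
      exact hlt
    set s := Real.sqrt (Q / r) with hsdef
    have hQr_pos : 0 < Q / r := by positivity
    have hs_pos : 0 < s := Real.sqrt_pos.mpr hQr_pos
    have hs_sq : s ^ 2 = Q / r := Real.sq_sqrt hQr_pos.le
    have harg : 1 < Q / r := by
      rw [lt_div_iff₀ hr]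
      nlinarith [hε1, hεpos]
    have hs1 : 1 < s := by
      have := Real.sqrt_lt_sqrt zero_le_one harg
      rwa [Real.sqrt_one] at this
    set t := Real.log s with htdef
    have ht : 0 < t := Real.log_pos hs1
    have hexp : Real.exp t = s := Real.exp_log hs_pos
    have hQr2 : Q * r < ε ^ 2 := by nlinarith
    apply main t ht
    · have hsq : (Real.exp t * r) ^ 2 < ε ^ 2 := by
        rw [hexp, mul_pow, hs_sq]
        calc Q / r * r ^ 2 = Q * r := by field_simp
        _ < ε ^ 2 := hQr2
      have := lt_of_pow_lt_pow_left₀ 2 hεpos.le hsq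
      exact this
    · have hsq : (Real.exp (-t) * Q) ^ 2 < ε ^ 2 := by
        rw [Real.exp_neg, hexp, mul_pow, inv_pow, hs_sq]
        calc (Q / r)⁻¹ * Q ^ 2 = Q * r := by field_simp
        _ < ε ^ 2 := hQr2
      have := lt_of_pow_lt_pow_left₀ 2 hεpos.le hsq
      exact this

end Dani


/-- `α` is badly approximable if and only if the forward diagonal orbit of `Λ_α` is
precompact in `X`. -/
theorem stmt7 (α : ℝ) :
    BadlyApproximable α ↔ IsCompact (closure (fwdOrbit (LatX α))) :=
  ⟨Dani.forward, Dani.backward⟩
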